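/- Let p be an odd prime and c an element of F_p with c^2 - 4 a nonsquare in F_p. Then the trinomial coefficient T(p-1,1), computed in F_p, equals c. -/

import Mathlib

/-- The trinomial coefficient: coefficient of `x^k` in `(x + c + x⁻¹)^n` over `R`. -/
noncomputable def triCoeff (R : Type*) [CommRing R] (c : R) (n : ℕ) (k : ℤ) : R :=
  (((LaurentPolynomial.T 1 + LaurentPolynomial.C c + LaurentPolynomial.T (-1)) ^ n :
      LaurentPolynomial R).coeff : ℤ →₀ R) k

open Polynomial in
/-- Key polynomial computation. -/
theorem tri_key (p : ℕ) [Fact p.Prime] (hp : p ≠ 2) (c : ZMod p)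
    (hsq : ¬ IsSquare (c ^ 2 - 4)) :
    ((X^2 + C c * X + 1 : (ZMod p)[X]) ^ (p-1)).coeff p = c := by
  have hpp : p.Prime := Fact.out
  have hodd : p % 2 = 1 := Nat.odd_iff.mp (hpp.odd_of_ne_two hp)
  have hp3 : 3 ≤ p := by have := hpp.two_le; omega
  set f : (ZMod p)[X] := X^2 + C c * X + 1 with hf
  set g : (ZMod p)[X] := f ^ (p-1) with hg
  -- basic polynomial facts
  have hfm : f.Monic := by rw [hf]; monicity!
  have hfd : f.natDegree = 2 := by rw [hf]; compute_degree!
  have hgm : g.Monic := hfm.pow _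
  have hgd : g.natDegree = 2*p-2 := by
    rw [hg, hfm.natDegree_pow, hfd]; omega
  have hfp : f ^ p = X^(2*p) + C c * X^p + 1 := by
    rw [hf, add_pow_char, add_pow_char, mul_pow, ← C_pow, ZMod.pow_card, ← pow_mul, one_pow]
  have hgf : g * f = f ^ p := by rw [hg, ← pow_succ]; congr 1; omega
  have hcm : ∀ m : ℕ, g.coeff m + c * g.coeff (m+1) + g.coeff (m+2) = (f^p).coeff (m+2) := by
    intro m
    rw [← hgf, hf, mul_add, mul_add, mul_one, coeff_add, coeff_add, coeff_mul_X_pow,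
      show g * (C c * X) = C c * (g * X) by ring, coeff_C_mul, show m + 2 = (m+1)+1 from rfl,
      coeff_mul_X]
  have hvanish : ∀ m : ℕ, p < m + 2 → m + 2 < 2*p → (f^p).coeff (m+2) = 0 := by
    intro m h1 h2
    rw [hfp, coeff_add, coeff_add, coeff_X_pow, coeff_C_mul, coeff_X_pow, coeff_one,
      if_neg (by omega), if_neg (by omega), if_neg (by omega)]
    ring
  -- splitting field and roots
  set K := f.SplittingField with hK
  set φ : ZMod p →+* K := algebraMap (ZMod p) K with hφdef
  have hφ : Function.Injective φ := φ.injective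
  haveI : CharP K p := charP_of_injective_ringHom hφ p
  have hdeg0 : f.degree ≠ 0 := by
    rw [degree_eq_natDegree hfm.ne_zero, hfd]; exact (by norm_num)
  obtain ⟨α, hαroot⟩ := Splits.exists_eval_eq_zero (SplittingField.splits f) (by rwa [degree_map])
  have hα : α^2 + φ c * α + 1 = 0 := by
    have h2 : eval₂ φ α (X^2 + C c * X + 1) = 0 := by rw [← eval_map]; exact hαroot
    simpa [eval₂_add, eval₂_mul, eval₂_pow, eval₂_X, eval₂_C, eval₂_one] using h2
  set β : K := -φ c - α with hβdef
  have hβ : β^2 + φ c * β + 1 = 0 := by rw [hβdef]; linear_combination hα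
  have hsum : α + β = -φ c := by rw [hβdef]; ring
  have hprodαβ : α * β = 1 := by rw [hβdef]; linear_combination -hα
  -- Euler's criterion: (c^2-4)^(p/2) = -1
  have hd0 : (c^2 - 4 : ZMod p) ≠ 0 := by
    intro h; exact hsq (by rw [show (c^2-4 : ZMod p) = 0 from h]; exact ⟨0, by ring⟩)
  have heuler : (c^2 - 4 : ZMod p) ^ (p/2) = -1 := by
    have h1 : (c^2-4 : ZMod p) ^ (p/2) ≠ 1 := fun h => hsq ((ZMod.euler_criterion p hd0).mpr h)
    have h2 : (c^2-4 : ZMod p) ^ (p/2) * (c^2-4 : ZMod p) ^ (p/2) = 1 := by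
      rw [← pow_add, show p/2 + p/2 = p - 1 by omega, ZMod.pow_card_sub_one_eq_one hd0]
    rcases mul_self_eq_one_iff.mp h2 with h | h
    · exact absurd h h1
    · exact h
  -- Frobenius sends α to β
  have h2K : (2 : K) ≠ 0 := by
    intro h
    have h2 : ((2:ℕ) : K) = 0 := by exact_mod_cast h
    have h3 := (CharP.cast_eq_zero_iff K p 2).mp h2
    have := Nat.le_of_dvd (by norm_num) h3
    omega
  have husq : (α - β)^2 = φ (c^2 - 4) := by
    rw [hβdef, map_sub, map_pow, map_ofNat]
    linear_combination (4:K) * hα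
  have hαβne : α - β ≠ 0 := by
    intro h
    apply hd0
    apply hφ
    rw [map_zero, ← husq, h]
    ring
  have hup : (α - β) ^ p = -(α - β) := by
    calc (α - β) ^ p = ((α-β)^2)^(p/2) * (α - β) := by
          rw [← pow_mul, ← pow_succ]; congr 1; omega
    _ = φ ((c^2-4)^(p/2)) * (α - β) := by rw [husq, map_pow]
    _ = -(α - β) := by rw [heuler, map_neg, map_one]; ring
  have hαp : α ^ p = β := by
    have hfrob : (α - β) ^ p = α ^ p - β ^ p := sub_pow_char α β
    have hβsub : β ^ p = -(φ c) - α ^ p := by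
      rw [hβdef]
      rw [show (-φ c - α : K) = -(φ c + α) by ring, neg_pow, Odd.neg_one_pow (hpp.odd_of_ne_two hp), add_pow_char, ← map_pow, ZMod.pow_card]
      ring
    have : (2 : K) * α ^ p = (2:K) * β := by
      have := hup
      rw [hfrob, hβsub] at this
      rw [hβdef]
      linear_combination this
    exact mul_left_cancel₀ h2K this
  have hβp : β ^ p = α := by
    rw [hβdef, show (-φ c - α : K) = -(φ c + α) by ring, neg_pow, Odd.neg_one_pow (hpp.odd_of_ne_two hp), add_pow_char, ← map_pow, ZMod.pow_card, hαp, hβdef]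
    ring
  -- solve the recurrence downward from the leading coefficient
  have e0 : g.coeff (2*p-2) = 1 := by rw [← hgd]; exact hgm.coeff_natDegree
  have e1 : g.coeff (2*p-1) = 0 := coeff_eq_zero_of_natDegree_lt (by rw [hgd]; omega)
  have main : ∀ j : ℕ, j + 1 ≤ p - 2 →
      ((α - β) * φ (g.coeff (2*p - 2 - j)) = α^(j+1) - β^(j+1)) ∧
      ((α - β) * φ (g.coeff (2*p - 2 - (j+1))) = α^(j+2) - β^(j+2)) := by
    intro j
    induction j with
    | zero =>
      intro _
      constructor
      · rw [show 2*p-2-0 = 2*p-2 by omega, e0, map_one, mul_one, pow_one, pow_one]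
      · have hrec := hcm (2*p-3)
        rw [hvanish _ (by omega) (by omega)] at hrec
        rw [show 2*p-3+1 = 2*p-2 by omega, show 2*p-3+2 = 2*p-1 by omega, e0, e1] at hrec
        have val : g.coeff (2*p-3) = -c := by linear_combination hrec
        rw [show 2*p-2-(0+1) = 2*p-3 by omega, val, map_neg]
        linear_combination (β - α) * hsum
    | succ j ih =>
      intro hle
      have prev := ih (by omega)
      refine ⟨prev.2, ?_⟩
      set m := 2*p - 4 - j with hm
      have hrec := hcm m
      rw [hvanish m (by omega) (by omega)] at hrec
      rw [show m + 1 = 2*p-2-(j+1) by omega, show m + 2 = 2*p-2-j by omega] at hrec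
      rw [show 2*p-2-(j+1+1) = m by omega]
      have val : g.coeff m = -c * g.coeff (2*p-2-(j+1)) - g.coeff (2*p-2-j) := by
        linear_combination hrec
      rw [val, map_sub, map_mul, map_neg]
      linear_combination (-φ c) * prev.2 - prev.1 - α^(j+1) * hα + β^(j+1) * hβ
  have fin := (main (p-3) (by omega)).2
  rw [show 2*p-2-(p-3+1) = p by omega, show p-3+2 = p-1 by omega] at fin
  have hαpm : α^(p-1) = β^2 := by
    have h1 : α^(p-1) * α = β := by
      rw [← pow_succ, show p-1+1 = p by omega]; exact hαp
    have h2 : α^(p-1) * (α*β) = β * β := by rw [← mul_assoc, h1]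
    rw [hprodαβ, mul_one] at h2
    rw [h2]; ring
  have hβpm : β^(p-1) = α^2 := by
    have h1 : β^(p-1) * β = α := by
      rw [← pow_succ, show p-1+1 = p by omega]; exact hβp
    have h2 : β^(p-1) * (α*β) = α * α := by
      rw [show β^(p-1) * (α*β) = β^(p-1)*β*α by ring, h1]
    rw [hprodαβ, mul_one] at h2
    rw [h2]; ring
  rw [hαpm, hβpm] at fin
  have key : (α - β) * φ (g.coeff p) = (α - β) * φ c := by
    rw [fin]; linear_combination (β - α) * hsum
  exact hφ (mul_left_cancel₀ hαβne key)

open Polynomial in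
/-- `triCoeff` in terms of ordinary polynomial coefficients. -/
theorem triCoeff_eq (R : Type*) [CommRing R] (c : R) (n : ℕ) (k : ℕ) (hk : k ≤ n) :
    triCoeff R c n k = ((X^2 + C c * X + 1 : R[X])^n).coeff (n - k + 2*k) := by
  have hL : (LaurentPolynomial.T 1 + LaurentPolynomial.C c + LaurentPolynomial.T (-1) :
      LaurentPolynomial R) = LaurentPolynomial.T (-1) * Polynomial.toLaurent (X^2 + C c * X + 1) := by
    rw [map_add, map_add, map_mul, Polynomial.toLaurent_X_pow, Polynomial.toLaurent_C,
      Polynomial.toLaurent_X, map_one, mul_add, mul_add, mul_one, ← LaurentPolynomial.T_add,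
      mul_comm (LaurentPolynomial.T (-1)), mul_assoc, ← LaurentPolynomial.T_add]
    norm_num
  have hpow : (LaurentPolynomial.T 1 + LaurentPolynomial.C c + LaurentPolynomial.T (-1) :
      LaurentPolynomial R) ^ n = LaurentPolynomial.T (-(n:ℤ)) *
        Polynomial.toLaurent ((X^2 + C c * X + 1 : R[X])^n) := by
    rw [hL, mul_pow, map_pow, LaurentPolynomial.T_pow]
    norm_num
  have happ : ∀ (g : R[X]) (m : ℤ) (j : ℕ),
      ((LaurentPolynomial.T m * Polynomial.toLaurent g : LaurentPolynomial R).coeff : ℤ →₀ R) (m + j) =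
        g.coeff j := by
    intro g m j
    rw [show (LaurentPolynomial.T m : LaurentPolynomial R) = AddMonoidAlgebra.single m 1 from rfl]
    rw [AddMonoidAlgebra.coeff_single_mul_apply]
    simp [Polynomial.toLaurent_apply]
    exact Finsupp.mapDomain_apply Int.ofNat_injective _ _
  have hk' : (k : ℤ) = -(n:ℤ) + (n - k + 2*k : ℕ) := by push_cast [Nat.sub_add_cancel]; omega
  rw [triCoeff, hpow, hk', happ]

theorem tri_p_sub_one_one_nonsq (p : ℕ) [Fact p.Prime] (hp : p ≠ 2) (c : ZMod p)
    (hsq : ¬ IsSquare (c ^ 2 - 4)) :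
    triCoeff (ZMod p) c (p - 1) 1 = c := by
  have hpp : p.Prime := Fact.out
  have hp3 : 3 ≤ p := by have := hpp.two_le; omega
  have h1 : (1:ℕ) ≤ p - 1 := by omega
  rw [show (1:ℤ) = ((1:ℕ):ℤ) from by norm_num]
  rw [triCoeff_eq _ c (p-1) 1 h1, show p - 1 - 1 + 2*1 = p by omega]
  exact tri_key p hp c hsq
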